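/- For every real t and every integer r ≥ 2, ∑_{k=0}^{r−2} ∑_{l=0}^{r−k−2} [ t^{2l+2k+3}/((2l+1)!(2k+2)!) − t^{2l+2k+4}/((2l+1)!(2k+3)!) ] = −(1/2) ∑_{i=3}^{2r} (−2t)^i/i! − (1−t) ∑_{i=0}^{r−2} t^{2i+3}/(2i+3)!. -/
import Mathlib


lemma sum_range_two_mul {M : Type*} [AddCommMonoid M] (f : ℕ → M) (m : ℕ) :
    ∑ j ∈ Finset.range (2 * m), f j =
      ∑ k ∈ Finset.range m, f (2 * k) + ∑ k ∈ Finset.range m, f (2 * k + 1) := by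
  induction m with
  | zero => simp
  | succ m ih =>
      have : 2 * (m + 1) = (2 * m + 1) + 1 := by ring
      rw [this, Finset.sum_range_succ, Finset.sum_range_succ, ih,
        Finset.sum_range_succ, Finset.sum_range_succ]
      abel

lemma even_sum_choose (n : ℕ) :
    ∑ k ∈ Finset.range (n + 2), ((2 * n + 3).choose (2 * k) : ℤ) = 2 ^ (2 * n + 2) := by
  have h1 : ∑ i ∈ Finset.range (2 * n + 3 + 1), (-1 : ℤ) ^ i * ((2 * n + 3).choose i) = 0 :=
    Int.alternating_sum_range_choose_of_ne (by omega)
  have h2 : ∑ i ∈ Finset.range (2 * n + 3 + 1), ((2 * n + 3).choose i : ℤ) = 2 ^ (2 * n + 3) := by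
    have := Nat.sum_range_choose (2 * n + 3)
    exact_mod_cast congrArg (Nat.cast : ℕ → ℤ) this
  have e : (2 * n + 3 + 1) = 2 * (n + 2) := by omega
  rw [e, sum_range_two_mul] at h1 h2
  have h3 : ∀ k ∈ Finset.range (n + 2),
      (-1 : ℤ) ^ (2 * k) * ((2 * n + 3).choose (2 * k)) = ((2 * n + 3).choose (2 * k) : ℤ) := by
    intro k _; rw [pow_mul]; norm_num
  have h4 : ∀ k ∈ Finset.range (n + 2),
      (-1 : ℤ) ^ (2 * k + 1) * ((2 * n + 3).choose (2 * k + 1)) =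
        -((2 * n + 3).choose (2 * k + 1) : ℤ) := by
    intro k _; rw [pow_succ, pow_mul]; norm_num
  rw [Finset.sum_congr rfl h3, Finset.sum_congr rfl h4, Finset.sum_neg_distrib] at h1
  have hp : (2 : ℤ) ^ (2 * n + 3) = 2 ^ (2 * n + 2) * 2 := by rw [← pow_succ]
  linarith

lemma odd_sum_choose (n : ℕ) :
    ∑ k ∈ Finset.range (n + 2), ((2 * n + 4).choose (2 * k + 1) : ℤ) = 2 ^ (2 * n + 3) := by
  have h1 : ∑ i ∈ Finset.range (2 * n + 4 + 1), (-1 : ℤ) ^ i * ((2 * n + 4).choose i) = 0 :=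
    Int.alternating_sum_range_choose_of_ne (by omega)
  have h2 : ∑ i ∈ Finset.range (2 * n + 4 + 1), ((2 * n + 4).choose i : ℤ) = 2 ^ (2 * n + 4) := by
    have := Nat.sum_range_choose (2 * n + 4)
    exact_mod_cast congrArg (Nat.cast : ℕ → ℤ) this
  -- extend to range (2*(n+3)) = 2n+6, extra term i = 2n+5 is 0
  have hz : ((2 * n + 4).choose (2 * n + 5) : ℤ) = 0 := by
    rw [Nat.choose_eq_zero_of_lt (by omega)]; simp
  have e : (2 * n + 6) = 2 * (n + 3) := by omega
  have h1' : ∑ i ∈ Finset.range (2 * (n + 3)), (-1 : ℤ) ^ i * ((2 * n + 4).choose i) = 0 := by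
    rw [← e]
    have : (2 * n + 6) = (2 * n + 4 + 1) + 1 := by omega
    rw [this, Finset.sum_range_succ, h1, hz]; ring
  have h2' : ∑ i ∈ Finset.range (2 * (n + 3)), ((2 * n + 4).choose i : ℤ) = 2 ^ (2 * n + 4) := by
    rw [← e]
    have : (2 * n + 6) = (2 * n + 4 + 1) + 1 := by omega
    rw [this, Finset.sum_range_succ, h2, hz]; ring
  rw [sum_range_two_mul] at h1' h2'
  have h3 : ∀ k ∈ Finset.range (n + 3),
      (-1 : ℤ) ^ (2 * k) * ((2 * n + 4).choose (2 * k)) = ((2 * n + 4).choose (2 * k) : ℤ) := by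
    intro k _; rw [pow_mul]; norm_num
  have h4 : ∀ k ∈ Finset.range (n + 3),
      (-1 : ℤ) ^ (2 * k + 1) * ((2 * n + 4).choose (2 * k + 1)) =
        -((2 * n + 4).choose (2 * k + 1) : ℤ) := by
    intro k _; rw [pow_succ, pow_mul]; norm_num
  rw [Finset.sum_congr rfl h3, Finset.sum_congr rfl h4, Finset.sum_neg_distrib] at h1'
  have hO : ∑ k ∈ Finset.range (n + 3), ((2 * n + 4).choose (2 * k + 1) : ℤ) =
      ∑ k ∈ Finset.range (n + 2), ((2 * n + 4).choose (2 * k + 1) : ℤ) := by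
    rw [Finset.sum_range_succ]
    have : 2 * (n + 2) + 1 = 2 * n + 5 := by omega
    rw [this, hz]; ring
  rw [hO] at h1'
  have hp : (2 : ℤ) ^ (2 * n + 4) = 2 ^ (2 * n + 3) * 2 := by rw [← pow_succ]
  have hE : ∑ k ∈ Finset.range (n + 3), ((2 * n + 4).choose (2 * k) : ℤ) =
      ∑ k ∈ Finset.range (n + 2), ((2 * n + 4).choose (2 * k + 1) : ℤ) := by linarith
  rw [hE] at h2'
  linarith

lemma sumA (n : ℕ) :
    ∑ k ∈ Finset.range (n + 1), ((2 * n + 3).choose (2 * k + 2) : ℤ) = 2 ^ (2 * n + 2) - 1 := by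
  have h := even_sum_choose n
  rw [Finset.sum_range_succ'] at h
  simp only [Nat.mul_zero, Nat.choose_zero_right] at h
  have : ∀ k ∈ Finset.range (n + 1),
      ((2 * n + 3).choose (2 * (k + 1)) : ℤ) = ((2 * n + 3).choose (2 * k + 2) : ℤ) := by
    intro k _; norm_num [Nat.mul_succ]
  rw [Finset.sum_congr rfl this] at h
  push_cast at h
  linarith

lemma sumB (n : ℕ) :
    ∑ k ∈ Finset.range (n + 1), ((2 * n + 4).choose (2 * k + 3) : ℤ) =
      2 ^ (2 * n + 3) - (2 * n + 4) := by
  have h := odd_sum_choose n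
  rw [Finset.sum_range_succ'] at h
  simp only [Nat.mul_zero, Nat.zero_add, Nat.choose_one_right] at h
  have : ∀ k ∈ Finset.range (n + 1),
      ((2 * n + 4).choose (2 * (k + 1) + 1) : ℤ) = ((2 * n + 4).choose (2 * k + 3) : ℤ) := by
    intro k _; norm_num [Nat.mul_succ]
  rw [Finset.sum_congr rfl this] at h
  push_cast at h
  linarith

lemma diag (t : ℝ) (n : ℕ) :
    ∑ k ∈ Finset.range (n + 1),
        (t ^ (2 * n + 3) /
            ((Nat.factorial (2 * (n - k) + 1) : ℝ) * (Nat.factorial (2 * k + 2))) -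
          t ^ (2 * n + 4) /
            ((Nat.factorial (2 * (n - k) + 1) : ℝ) * (Nat.factorial (2 * k + 3)))) =
      ((2 : ℝ) ^ (2 * n + 2) - 1) * t ^ (2 * n + 3) / (Nat.factorial (2 * n + 3)) -
        ((2 : ℝ) ^ (2 * n + 3) - (2 * n + 4)) * t ^ (2 * n + 4) / (Nat.factorial (2 * n + 4)) := by
  have key : ∀ k ∈ Finset.range (n + 1),
      (t ^ (2 * n + 3) /
            ((Nat.factorial (2 * (n - k) + 1) : ℝ) * (Nat.factorial (2 * k + 2))) -
          t ^ (2 * n + 4) /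
            ((Nat.factorial (2 * (n - k) + 1) : ℝ) * (Nat.factorial (2 * k + 3)))) =
      ((2 * n + 3).choose (2 * k + 2) : ℝ) * t ^ (2 * n + 3) / (Nat.factorial (2 * n + 3)) -
        ((2 * n + 4).choose (2 * k + 3) : ℝ) * t ^ (2 * n + 4) / (Nat.factorial (2 * n + 4)) := by
    intro k hk
    have hk' : k ≤ n := by simpa using Nat.lt_succ_iff.mp (Finset.mem_range.mp hk)
    have e1 : 2 * (n - k) + 1 + (2 * k + 2) = 2 * n + 3 := by omega
    have e2 : 2 * (n - k) + 1 + (2 * k + 3) = 2 * n + 4 := by omega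
    have f1 := Nat.add_choose_mul_factorial_mul_factorial (2 * (n - k) + 1) (2 * k + 2)
    have f2 := Nat.add_choose_mul_factorial_mul_factorial (2 * (n - k) + 1) (2 * k + 3)
    rw [e1] at f1; rw [e2] at f2
    have f1' : ((2 * n + 3).choose (2 * k + 2) : ℝ) *
        (Nat.factorial (2 * (n - k) + 1) : ℝ) * (Nat.factorial (2 * k + 2)) =
        (Nat.factorial (2 * n + 3) : ℝ) := by exact_mod_cast congrArg (Nat.cast : ℕ → ℝ) f1
    have f2' : ((2 * n + 4).choose (2 * k + 3) : ℝ) *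
        (Nat.factorial (2 * (n - k) + 1) : ℝ) * (Nat.factorial (2 * k + 3)) =
        (Nat.factorial (2 * n + 4) : ℝ) := by exact_mod_cast congrArg (Nat.cast : ℕ → ℝ) f2
    have p1 : (Nat.factorial (2 * (n - k) + 1) : ℝ) ≠ 0 := by positivity
    have p2 : (Nat.factorial (2 * k + 2) : ℝ) ≠ 0 := by positivity
    have p3 : (Nat.factorial (2 * k + 3) : ℝ) ≠ 0 := by positivity
    have p4 : (Nat.factorial (2 * n + 3) : ℝ) ≠ 0 := by positivity
    have p5 : (Nat.factorial (2 * n + 4) : ℝ) ≠ 0 := by positivity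
    have d1 : t ^ (2 * n + 3) /
        ((Nat.factorial (2 * (n - k) + 1) : ℝ) * (Nat.factorial (2 * k + 2))) =
        ((2 * n + 3).choose (2 * k + 2) : ℝ) * t ^ (2 * n + 3) / (Nat.factorial (2 * n + 3)) := by
      rw [div_eq_div_iff (by positivity) p4, ← f1']; ring
    have d2 : t ^ (2 * n + 4) /
        ((Nat.factorial (2 * (n - k) + 1) : ℝ) * (Nat.factorial (2 * k + 3))) =
        ((2 * n + 4).choose (2 * k + 3) : ℝ) * t ^ (2 * n + 4) / (Nat.factorial (2 * n + 4)) := by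
      rw [div_eq_div_iff (by positivity) p5, ← f2']; ring
    rw [d1, d2]
  rw [Finset.sum_congr rfl key, Finset.sum_sub_distrib]
  have cA : ∑ k ∈ Finset.range (n + 1), ((2 * n + 3).choose (2 * k + 2) : ℝ) =
      (2 : ℝ) ^ (2 * n + 2) - 1 := by exact_mod_cast congrArg (Int.cast : ℤ → ℝ) (sumA n)
  have cB : ∑ k ∈ Finset.range (n + 1), ((2 * n + 4).choose (2 * k + 3) : ℝ) =
      (2 : ℝ) ^ (2 * n + 3) - (2 * n + 4) := by
    have := congrArg (Int.cast : ℤ → ℝ) (sumB n)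
    push_cast at this ⊢
    convert this using 2
  simp only [div_eq_mul_inv, ← Finset.sum_mul]
  rw [cA, cB]

lemma main_id (t : ℝ) (m : ℕ) :
    ∑ k ∈ Finset.range m, ∑ l ∈ Finset.range (m - k),
        (t ^ (2 * l + 2 * k + 3) /
            ((Nat.factorial (2 * l + 1) : ℝ) * (Nat.factorial (2 * k + 2))) -
          t ^ (2 * l + 2 * k + 4) /
            ((Nat.factorial (2 * l + 1) : ℝ) * (Nat.factorial (2 * k + 3)))) =
      -(1 / 2) * ∑ i ∈ Finset.Icc 3 (2 * m + 2), (-2 * t) ^ i / (Nat.factorial i) -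
        (1 - t) * ∑ i ∈ Finset.range m, t ^ (2 * i + 3) / (Nat.factorial (2 * i + 3)) := by
  induction m with
  | zero => simp
  | succ m ih =>
      have step1 : ∀ k ∈ Finset.range (m + 1),
          (∑ l ∈ Finset.range (m + 1 - k),
            (t ^ (2 * l + 2 * k + 3) /
                ((Nat.factorial (2 * l + 1) : ℝ) * (Nat.factorial (2 * k + 2))) -
              t ^ (2 * l + 2 * k + 4) /
                ((Nat.factorial (2 * l + 1) : ℝ) * (Nat.factorial (2 * k + 3))))) =
          (∑ l ∈ Finset.range (m - k),
            (t ^ (2 * l + 2 * k + 3) /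
                ((Nat.factorial (2 * l + 1) : ℝ) * (Nat.factorial (2 * k + 2))) -
              t ^ (2 * l + 2 * k + 4) /
                ((Nat.factorial (2 * l + 1) : ℝ) * (Nat.factorial (2 * k + 3))))) +
            (t ^ (2 * (m - k) + 2 * k + 3) /
                ((Nat.factorial (2 * (m - k) + 1) : ℝ) * (Nat.factorial (2 * k + 2))) -
              t ^ (2 * (m - k) + 2 * k + 4) /
                ((Nat.factorial (2 * (m - k) + 1) : ℝ) * (Nat.factorial (2 * k + 3)))) := by
        intro k hk
        have hk' : k ≤ m := Nat.lt_succ_iff.mp (Finset.mem_range.mp hk)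
        rw [show m + 1 - k = (m - k) + 1 by omega, Finset.sum_range_succ]
      rw [Finset.sum_congr rfl step1, Finset.sum_add_distrib, Finset.sum_range_succ]
      simp only [Nat.sub_self, Finset.range_zero, Finset.sum_empty, add_zero]
      rw [ih]
      have hdiag : (∑ k ∈ Finset.range (m + 1),
          (t ^ (2 * (m - k) + 2 * k + 3) /
              ((Nat.factorial (2 * (m - k) + 1) : ℝ) * (Nat.factorial (2 * k + 2))) -
            t ^ (2 * (m - k) + 2 * k + 4) /
              ((Nat.factorial (2 * (m - k) + 1) : ℝ) * (Nat.factorial (2 * k + 3))))) =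
          ((2 : ℝ) ^ (2 * m + 2) - 1) * t ^ (2 * m + 3) / (Nat.factorial (2 * m + 3)) -
            ((2 : ℝ) ^ (2 * m + 3) - (2 * m + 4)) * t ^ (2 * m + 4) /
              (Nat.factorial (2 * m + 4)) := by
        rw [← diag t m]
        refine Finset.sum_congr rfl fun k hk => ?_
        have hk' : k ≤ m := Nat.lt_succ_iff.mp (Finset.mem_range.mp hk)
        rw [show 2 * (m - k) + 2 * k + 3 = 2 * m + 3 by omega,
          show 2 * (m - k) + 2 * k + 4 = 2 * m + 4 by omega]
      rw [hdiag]
      have hR : (∑ i ∈ Finset.Icc 3 (2 * (m + 1) + 2), (-2 * t) ^ i / (Nat.factorial i : ℝ)) =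
          (∑ i ∈ Finset.Icc 3 (2 * m + 2), (-2 * t) ^ i / (Nat.factorial i : ℝ)) +
            (-2 * t) ^ (2 * m + 3) / (Nat.factorial (2 * m + 3)) +
            (-2 * t) ^ (2 * m + 4) / (Nat.factorial (2 * m + 4)) := by
        rw [show 2 * (m + 1) + 2 = (2 * m + 3) + 1 by ring,
          Finset.sum_Icc_succ_top (by omega), show (2 * m + 3) = (2 * m + 2) + 1 by ring,
          Finset.sum_Icc_succ_top (by omega)]
      rw [hR, Finset.sum_range_succ]
      have hp1 : (-2 * t) ^ (2 * m + 3) = -(2 ^ (2 * m + 3) * t ^ (2 * m + 3)) := by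
        rw [mul_pow, Odd.neg_pow ⟨m + 1, by ring⟩]; exact neg_mul _ _
      have hp2 : (-2 * t) ^ (2 * m + 4) = 2 ^ (2 * m + 4) * t ^ (2 * m + 4) := by
        rw [mul_pow, Even.neg_pow ⟨m + 2, by ring⟩]
      rw [hp1, hp2]
      have hfact : (Nat.factorial (2 * m + 4) : ℝ) =
          (2 * m + 4) * Nat.factorial (2 * m + 3) := by
        rw [show 2 * m + 4 = (2 * m + 3) + 1 from by ring, Nat.factorial_succ]
        push_cast; ring
      have p4 : (Nat.factorial (2 * m + 3) : ℝ) ≠ 0 := by positivity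
      rw [hfact]
      have h24 : ((2 * m + 4 : ℕ) : ℝ) ≠ 0 := by positivity
      field_simp
      ring


theorem double_sum_identity (t : ℝ) (r : ℕ) (hr : 2 ≤ r) :
    ∑ k ∈ Finset.range (r - 1), ∑ l ∈ Finset.range (r - k - 1),
        (t ^ (2 * l + 2 * k + 3) /
            ((Nat.factorial (2 * l + 1) : ℝ) * (Nat.factorial (2 * k + 2))) -
          t ^ (2 * l + 2 * k + 4) /
            ((Nat.factorial (2 * l + 1) : ℝ) * (Nat.factorial (2 * k + 3)))) =
      -(1 / 2) * ∑ i ∈ Finset.Icc 3 (2 * r), (-2 * t) ^ i / (Nat.factorial i) -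
        (1 - t) * ∑ i ∈ Finset.range (r - 1), t ^ (2 * i + 3) / (Nat.factorial (2 * i + 3)) := by
  obtain ⟨m, rfl⟩ : ∃ m, r = m + 1 := ⟨r - 1, by omega⟩
  have h := main_id t m
  have e1 : m + 1 - 1 = m := by omega
  have e2 : ∀ k, m + 1 - k - 1 = m - k := by intro k; omega
  simp only [e1, e2, show 2 * (m + 1) = 2 * m + 2 by ring]
  exact h
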